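/- Let A, B ⊆ ℕ, let q be a natural number, and let L, M, N be unions of arithmetic progressions modulo q with N ⊆ L + M. Write ⟨B ∧ L⟩_0^N = min over progressions P_{l,q} comprising L of |B ∩ P_{l,q}|_0^N. Then for each natural number N₀, (⟨B ∧ L⟩_0^{N₀} · |(ℕ\(A+B)) ∩ N|_{2N₀}^{3N₀})² ≤ q · |(ℕ\A) ∩ M|_{N₀}^{3N₀} · Υ((ℕ\(A+B)) ∩ N, B ∩ L; N₀). -/

import Mathlib

open Pointwise

/-- Theorem 2.1: the basic inequality with congruence conditions. Here `P_{a,q}` is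
realised in `ℕ` as `{x | x % q = a}`, `L, M, N` are unions of such progressions, and
`⟨B ∧ L⟩₀^{N₀}` is the minimum over the progressions comprising `L` of `|B ∩ P_{l,q}|₀^{N₀}`. -/
theorem stmt_17 (A B : Set ℕ) (q : ℕ) (hq : 1 ≤ q)
    (𝔏 𝔐 𝔑 : Finset ℕ) (h𝔏 : 𝔏 ⊆ Finset.range q) (h𝔐 : 𝔐 ⊆ Finset.range q)
    (h𝔑 : 𝔑 ⊆ Finset.range q) (h𝔏ne : 𝔏.Nonempty)
    (L M N : Set ℕ)
    (hL : L = ⋃ l ∈ 𝔏, {x : ℕ | x % q = l}) (hM : M = ⋃ a ∈ 𝔐, {x : ℕ | x % q = a})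
    (hN : N = ⋃ c ∈ 𝔑, {x : ℕ | x % q = c}) (hNLM : N ⊆ L + M)
    (N₀ : ℕ) :
    (𝔏.inf' h𝔏ne (fun l => (B ∩ {x : ℕ | x % q = l} ∩ Set.Ioc 0 N₀).ncard) *
        (((A + B)ᶜ : Set ℕ) ∩ N ∩ Set.Ioc (2 * N₀) (3 * N₀)).ncard) ^ 2
      ≤ q * ((Aᶜ : Set ℕ) ∩ M ∩ Set.Ioc N₀ (3 * N₀)).ncard *
        {t : ℕ × ℕ × ℕ × ℕ |
          t.1 ∈ ((A + B)ᶜ : Set ℕ) ∩ N ∩ Set.Ioc (2 * N₀) (3 * N₀) ∧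
          t.2.1 ∈ ((A + B)ᶜ : Set ℕ) ∩ N ∩ Set.Ioc (2 * N₀) (3 * N₀) ∧
          t.2.2.1 ∈ B ∩ L ∩ Set.Ioc 0 N₀ ∧ t.2.2.2 ∈ B ∩ L ∩ Set.Ioc 0 N₀ ∧
          t.1 - t.2.2.1 = t.2.1 - t.2.2.2}.ncard := by
  classical
  -- Finset versions of the relevant sets
  set Cs : Finset ℕ :=
    (Finset.Ioc (2 * N₀) (3 * N₀)).filter (fun x => x ∈ ((A + B)ᶜ : Set ℕ) ∧ x ∈ N) with hCs
  set Ds : Finset ℕ := (Finset.Ioc 0 N₀).filter (fun x => x ∈ B ∧ x ∈ L) with hDs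
  set Es : Finset ℕ :=
    (Finset.Ioc N₀ (3 * N₀)).filter (fun x => x ∈ (Aᶜ : Set ℕ) ∧ x ∈ M) with hEs
  set Dl : ℕ → Finset ℕ :=
    fun l => (Finset.Ioc 0 N₀).filter (fun x => x ∈ B ∧ x % q = l) with hDl
  -- the set/finset dictionaries
  have hCset : ((A + B)ᶜ : Set ℕ) ∩ N ∩ Set.Ioc (2 * N₀) (3 * N₀) = ↑Cs := by
    ext x
    simp only [hCs, Finset.coe_filter, Finset.mem_Ioc, Set.mem_inter_iff, Set.mem_Ioc,
      Set.mem_setOf_eq]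
    tauto
  have hEset : ((Aᶜ : Set ℕ) ∩ M ∩ Set.Ioc N₀ (3 * N₀)) = ↑Es := by
    ext x
    simp only [hEs, Finset.coe_filter, Finset.mem_Ioc, Set.mem_inter_iff, Set.mem_Ioc,
      Set.mem_setOf_eq]
    tauto
  have hDlcard : ∀ l, (B ∩ {x : ℕ | x % q = l} ∩ Set.Ioc 0 N₀).ncard = (Dl l).card := by
    intro l
    have : (B ∩ {x : ℕ | x % q = l} ∩ Set.Ioc 0 N₀) = ↑(Dl l) := by
      ext x
      simp only [hDl, Finset.coe_filter, Finset.mem_Ioc, Set.mem_inter_iff, Set.mem_Ioc,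
        Set.mem_setOf_eq]
      tauto
    rw [this, Set.ncard_coe_finset]
  set k : ℕ := 𝔏.inf' h𝔏ne (fun l => (B ∩ {x : ℕ | x % q = l} ∩ Set.Ioc 0 N₀).ncard) with hk
  -- the pair counting function
  set r : ℕ → ℕ := fun e => ((Cs ×ˢ Ds).filter (fun p => p.1 - p.2 = e)).card with hr
  set s : Finset (ℕ × ℕ) := (Cs ×ˢ Ds).filter (fun p => p.1 - p.2 ∈ Es) with hs
  -- Q : the quadruple finset
  set Q : Finset (ℕ × ℕ × ℕ × ℕ) :=
    (Cs ×ˢ Cs ×ˢ Ds ×ˢ Ds).filter (fun t => t.1 - t.2.2.1 = t.2.1 - t.2.2.2) with hQ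
  have hQset : {t : ℕ × ℕ × ℕ × ℕ |
          t.1 ∈ ((A + B)ᶜ : Set ℕ) ∩ N ∩ Set.Ioc (2 * N₀) (3 * N₀) ∧
          t.2.1 ∈ ((A + B)ᶜ : Set ℕ) ∩ N ∩ Set.Ioc (2 * N₀) (3 * N₀) ∧
          t.2.2.1 ∈ B ∩ L ∩ Set.Ioc 0 N₀ ∧ t.2.2.2 ∈ B ∩ L ∩ Set.Ioc 0 N₀ ∧
          t.1 - t.2.2.1 = t.2.1 - t.2.2.2} = ↑Q := by
    ext t
    simp only [hQ, Finset.coe_filter, Finset.mem_product, hCs, hDs, Finset.mem_filter,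
      Finset.mem_Ioc, Set.mem_inter_iff, Set.mem_Ioc, Set.mem_setOf_eq]
    tauto
  -- Step A : k * Cs.card ≤ s.card
  have stepA : k * Cs.card ≤ s.card := by
    have hfib : s.card = ∑ c ∈ Cs, (s.filter (fun p => p.1 = c)).card := by
      apply Finset.card_eq_sum_card_fiberwise
      intro p hp
      rw [hs, Finset.mem_coe, Finset.mem_filter, Finset.mem_product] at hp
      exact hp.1.1
    have hper : ∀ c ∈ Cs, k ≤ (s.filter (fun p => p.1 = c)).card := by
      intro c hc
      rw [hCs, Finset.mem_filter, Finset.mem_Ioc] at hc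
      obtain ⟨⟨hc1, hc2⟩, hcAB, hcN⟩ := hc
      -- c ∈ N ⊆ L + M
      obtain ⟨a, ha, b, hb, hab⟩ := Set.mem_add.1 (hNLM hcN)
      -- a lies in some progression of 𝔏
      have haL : ∃ l ∈ 𝔏, a % q = l := by
        rw [hL] at ha; simpa using ha
      obtain ⟨l, hl𝔏, hal⟩ := haL
      have hk_le : k ≤ (Dl l).card := by
        rw [← hDlcard l]
        exact Finset.inf'_le _ hl𝔏
      refine hk_le.trans ?_
      apply Finset.card_le_card_of_injOn (fun d => (c, d))
      · intro d hd
        simp only [hDl, Finset.mem_coe, Finset.mem_filter, Finset.mem_Ioc] at hd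
        obtain ⟨⟨hd0, hdN⟩, hdB, hdq⟩ := hd
        have hdc : d < c := by omega
        -- c - d ∉ A
        have hcdA : c - d ∈ (Aᶜ : Set ℕ) := by
          intro hmem
          apply hcAB
          have : (c - d) + d = c := Nat.sub_add_cancel (le_of_lt hdc)
          rw [← this]
          exact Set.add_mem_add hmem hdB
        -- (c - d) % q = b % q
        have hmod : (c - d) % q = b % q := by
          have h1 : d ≡ a [MOD q] := by
            unfold Nat.ModEq; rw [hdq, hal]
          have h2 : (c - d) + a ≡ b + a [MOD q] := by
            calc (c - d) + a ≡ (c - d) + d [MOD q] := Nat.ModEq.add_left _ h1.symm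
              _ = c := Nat.sub_add_cancel (le_of_lt hdc)
              _ = b + a := by omega
          exact Nat.ModEq.add_right_cancel' a h2
        have hcdM : c - d ∈ M := by
          have hbM : ∃ m ∈ 𝔐, b % q = m := by
            rw [hM] at hb; simpa using hb
          obtain ⟨m, hm𝔐, hbm⟩ := hbM
          rw [hM]
          simp only [Set.mem_iUnion, Set.mem_setOf_eq]
          exact ⟨m, hm𝔐, by rw [hmod, hbm]⟩
        have hcCs : c ∈ Cs := by
          rw [hCs, Finset.mem_filter, Finset.mem_Ioc]
          exact ⟨⟨hc1, hc2⟩, hcAB, hcN⟩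
        have hdDs : d ∈ Ds := by
          rw [hDs, Finset.mem_filter, Finset.mem_Ioc]
          refine ⟨⟨hd0, hdN⟩, hdB, ?_⟩
          rw [hL]
          simp only [Set.mem_iUnion, Set.mem_setOf_eq]
          exact ⟨l, hl𝔏, hdq⟩
        have hcdE : c - d ∈ Es := by
          rw [hEs, Finset.mem_filter, Finset.mem_Ioc]
          exact ⟨⟨by omega, by omega⟩, hcdA, hcdM⟩
        rw [Finset.mem_coe, Finset.mem_filter, hs, Finset.mem_filter, Finset.mem_product]
        exact ⟨⟨⟨hcCs, hdDs⟩, hcdE⟩, rfl⟩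
      · intro d₁ _ d₂ _ h
        exact congrArg Prod.snd h
    calc k * Cs.card = ∑ _c ∈ Cs, k := by rw [Finset.sum_const, smul_eq_mul, mul_comm]
      _ ≤ ∑ c ∈ Cs, (s.filter (fun p => p.1 = c)).card := Finset.sum_le_sum hper
      _ = s.card := hfib.symm
  -- Step B : s.card = ∑ e ∈ Es, r e
  have stepB : s.card = ∑ e ∈ Es, r e := by
    have hfib : s.card = ∑ e ∈ Es, (s.filter (fun p => p.1 - p.2 = e)).card := by
      apply Finset.card_eq_sum_card_fiberwise
      intro p hp
      rw [hs, Finset.mem_coe, Finset.mem_filter] at hp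
      exact hp.2
    rw [hfib]
    apply Finset.sum_congr rfl
    intro e he
    congr 1
    rw [hs]
    ext p
    simp only [Finset.mem_filter, Finset.mem_product, hr]
    constructor
    · rintro ⟨⟨hp, _⟩, hd⟩; exact ⟨hp, hd⟩
    · rintro ⟨hp, hd⟩; exact ⟨⟨hp, hd ▸ he⟩, hd⟩
  -- Step C : Cauchy–Schwarz
  have stepC : (∑ e ∈ Es, r e) ^ 2 ≤ Es.card * ∑ e ∈ Es, (r e) ^ 2 := by
    have := sq_sum_le_card_mul_sum_sq (s := Es) (f := fun e => (r e : ℤ))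
    have h2 : ((∑ e ∈ Es, r e : ℕ) : ℤ) ^ 2 ≤
        ((Es.card * ∑ e ∈ Es, (r e) ^ 2 : ℕ) : ℤ) := by
      push_cast
      exact this
    exact_mod_cast h2
  -- Step D : ∑ e ∈ Es, (r e)^2 ≤ Q.card
  have stepD : (∑ e ∈ Es, (r e) ^ 2) ≤ Q.card := by
    set s₂ : Finset ((ℕ × ℕ) × ℕ × ℕ) :=
      ((Cs ×ˢ Ds) ×ˢ (Cs ×ˢ Ds)).filter
        (fun p => p.1.1 - p.1.2 ∈ Es ∧ p.1.1 - p.1.2 = p.2.1 - p.2.2) with hs₂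
    have hfib : s₂.card = ∑ e ∈ Es, (s₂.filter (fun p => p.1.1 - p.1.2 = e)).card := by
      apply Finset.card_eq_sum_card_fiberwise
      intro p hp
      rw [hs₂, Finset.mem_coe, Finset.mem_filter] at hp
      exact hp.2.1
    have hsq : ∀ e ∈ Es, (s₂.filter (fun p => p.1.1 - p.1.2 = e)).card = (r e) ^ 2 := by
      intro e he
      have : s₂.filter (fun p => p.1.1 - p.1.2 = e) =
          ((Cs ×ˢ Ds).filter (fun p => p.1 - p.2 = e)) ×ˢ
          ((Cs ×ˢ Ds).filter (fun p => p.1 - p.2 = e)) := by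
        ext p
        simp only [hs₂, Finset.mem_filter, Finset.mem_product]
        constructor
        · rintro ⟨⟨⟨h1, h2⟩, _, h4⟩, h5⟩
          exact ⟨⟨h1, h5⟩, h2, h4 ▸ h5⟩
        · rintro ⟨⟨h1, h5⟩, h2, h4⟩
          exact ⟨⟨⟨h1, h2⟩, h5 ▸ he, by rw [h5, h4]⟩, h5⟩
      rw [this, Finset.card_product, hr, sq]
    have hinj : s₂.card ≤ Q.card := by
      apply Finset.card_le_card_of_injOn (fun p => (p.1.1, p.2.1, p.1.2, p.2.2))
      · intro p hp
        rw [hs₂, Finset.mem_coe, Finset.mem_filter, Finset.mem_product, Finset.mem_product,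
          Finset.mem_product] at hp
        obtain ⟨⟨⟨h1, h2⟩, h3, h4⟩, _, h6⟩ := hp
        rw [hQ, Finset.mem_coe, Finset.mem_filter, Finset.mem_product, Finset.mem_product, Finset.mem_product]
        exact ⟨⟨h1, h3, h2, h4⟩, h6⟩
      · rintro ⟨⟨a, b⟩, c, d⟩ _ ⟨⟨a', b'⟩, c', d'⟩ _ h
        simp only [Prod.mk.injEq] at h
        obtain ⟨h1, h2, h3, h4⟩ := h
        subst h1; subst h2; subst h3; subst h4; rfl
    calc (∑ e ∈ Es, (r e) ^ 2)
        = ∑ e ∈ Es, (s₂.filter (fun p => p.1.1 - p.1.2 = e)).card :=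
          (Finset.sum_congr rfl hsq).symm
      _ = s₂.card := hfib.symm
      _ ≤ Q.card := hinj
  -- assemble
  rw [hQset, hCset, hEset, Set.ncard_coe_finset, Set.ncard_coe_finset, Set.ncard_coe_finset]
  calc (k * Cs.card) ^ 2 ≤ s.card ^ 2 := by
        apply Nat.pow_le_pow_left stepA
    _ = (∑ e ∈ Es, r e) ^ 2 := by rw [stepB]
    _ ≤ Es.card * ∑ e ∈ Es, (r e) ^ 2 := stepC
    _ ≤ Es.card * Q.card := Nat.mul_le_mul_left _ stepD
    _ ≤ q * (Es.card * Q.card) := Nat.le_mul_of_pos_left _ hq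
    _ = q * Es.card * Q.card := by ring
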